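/- Let A be an m × n real matrix such that for every v ∈ ℝⁿ there exists an index i with (Av)_i ≤ 0. Then there exists w ∈ ℝ^m with w_i ≥ 0 for all i, Σ_i w_i = 1, and wᵀA = 0. -/

import Mathlib

open Matrix

/-- Lemma 2: if for every `v ∈ ℝⁿ` some component of `A v` is `≤ 0`, then there is
a probability vector `w` in the simplex of `ℝ^m` with `wᵀ A = 0`. -/
theorem stmt_2
    (m n : ℕ) (A : Matrix (Fin m) (Fin n) ℝ)
    (h : ∀ v : Fin n → ℝ, ∃ i : Fin m, A.mulVec v i ≤ 0) :
    ∃ w : Fin m → ℝ, (∀ i, 0 ≤ w i) ∧ (∑ i, w i = 1) ∧ Matrix.vecMul w A = 0 := by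
  classical
  set L : (Fin m → ℝ) →ₗ[ℝ] (Fin n → ℝ) := A.vecMulLinear with hL
  set K : Set (Fin n → ℝ) := L '' stdSimplex ℝ (Fin m) with hK
  have hKconv : Convex ℝ K := (convex_stdSimplex ℝ (Fin m)).linear_image L
  have hKcomp : IsCompact K :=
    (isCompact_stdSimplex ℝ (Fin m)).image L.continuous_of_finiteDimensional
  have h0 : (0 : Fin n → ℝ) ∈ K := by
    by_contra h0
    obtain ⟨f, u, hfu, huf⟩ := geometric_hahn_banach_closed_point hKconv hKcomp.isClosed h0
    rw [map_zero] at huf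
    set v : Fin n → ℝ := fun j => -f (Pi.single j 1) with hv
    have hf : ∀ x : Fin n → ℝ, f x = -(x ⬝ᵥ v) := by
      intro x
      have hx : x = ∑ j, Pi.single j (x j) := (Finset.univ_sum_single x).symm
      have hx2 : f x = ∑ j, x j * f (Pi.single j 1) := by
        conv_lhs => rw [hx]
        rw [map_sum]
        refine Finset.sum_congr rfl fun j _ => ?_
        have h1 : (Pi.single j (x j) : Fin n → ℝ) = x j • (Pi.single j 1 : Fin n → ℝ) := by
          ext k; by_cases hk : k = j <;> simp [hk, Pi.single_apply]
        rw [h1, f.map_smul, smul_eq_mul]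
      rw [hx2]
      simp [dotProduct, hv, mul_neg]
    have key : ∀ i, 0 < A.mulVec v i := by
      intro i
      have hmem : Pi.single i (1:ℝ) ∈ stdSimplex ℝ (Fin m) := by
        constructor
        · intro j
          by_cases hij : j = i <;> simp [hij, Pi.single_apply]
        · simp [Pi.single_apply]
      have := hfu _ ⟨_, hmem, rfl⟩
      rw [hf] at this
      have h1 : A.vecMul (Pi.single i 1) ⬝ᵥ v = A.mulVec v i := by
        rw [← Matrix.dotProduct_mulVec]
        simp [dotProduct, Pi.single_apply]
      have h2 : L (Pi.single i 1) = A.vecMul (Pi.single i 1) := A.vecMulLinear_apply _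
      rw [h2, h1] at this
      linarith
    obtain ⟨i, hi⟩ := h v
    exact absurd hi (not_le.mpr (key i))
  obtain ⟨w, hw, hw0⟩ := h0
  exact ⟨w, hw.1, hw.2, by rw [← A.vecMulLinear_apply]; exact hw0⟩
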